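/- Let X : Δᵒᵖ → Set be a continuous simplicial set. Then the relation ≤_X is a partial order on X₀: it is reflexive, transitive, and antisymmetric. -/

import Mathlib

open CategoryTheory Limits Opposite

/-- A simplicial set `X : Δᵒᵖ ⥤ Type` is *continuous* if it preserves all limits that
exist in `Δᵒᵖ`; equivalently, it takes colimits in `Δ` to limits in `Set`. -/
def IsContinuousSSet (X : SimplexCategoryᵒᵖ ⥤ Type) : Prop :=
  ∀ ⦃J : Type⦄ [SmallCategory J] (D : J ⥤ SimplexCategoryᵒᵖ) (c : Cone D),
    Nonempty (IsLimit c) → Nonempty (IsLimit (X.mapCone c))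

/-- The relation `≤_X` on the `0`-simplices of a simplicial set `X`:
`x ≤_X y` iff there is a `1`-simplex `f` with `d₁ f = x` and `d₀ f = y`. -/
def sSetLe (X : SimplexCategoryᵒᵖ ⥤ Type) (x y : X.obj (op (SimplexCategory.mk 0))) : Prop :=
  ∃ f : X.obj (op (SimplexCategory.mk 1)),
    X.map (SimplexCategory.δ 1).op f = x ∧ X.map (SimplexCategory.δ 0).op f = y

namespace SSetPO
open SimplexCategory

/-- glue two 1-simplices sharing an endpoint into a map from `[2]`. -/
def myGlue (m : SimplexCategory) (u v : SimplexCategory.mk 1 ⟶ m)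
    (huv : u.toOrderHom 1 = v.toOrderHom 0) : SimplexCategory.mk 2 ⟶ m :=
  SimplexCategory.Hom.mk
    { toFun := fun i => if h : (i : ℕ) ≤ 1 then u.toOrderHom ⟨i, by show (i:ℕ) < 1 + 1; omega⟩
        else v.toOrderHom 1
      monotone' := by
        intro i j hij
        dsimp only
        by_cases hi : (i : ℕ) ≤ 1 <;> by_cases hj : (j : ℕ) ≤ 1 <;> simp [hi, hj]
        · exact u.toOrderHom.monotone (by exact hij)
        · calc u.toOrderHom ⟨i, by show (i:ℕ) < 1 + 1; omega⟩ ≤ u.toOrderHom 1 :=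
              u.toOrderHom.monotone (by simp [Fin.le_def]; omega)
            _ = v.toOrderHom 0 := huv
            _ ≤ v.toOrderHom 1 := v.toOrderHom.monotone (by decide)
        · omega }

lemma d2_glue (m : SimplexCategory) (u v : SimplexCategory.mk 1 ⟶ m)
    (huv : u.toOrderHom 1 = v.toOrderHom 0) :
    δ 2 ≫ myGlue m u v huv = u := by
  apply SimplexCategory.Hom.ext; apply OrderHom.ext; funext i; fin_cases i <;> rfl

lemma d0_glue (m : SimplexCategory) (u v : SimplexCategory.mk 1 ⟶ m)
    (huv : u.toOrderHom 1 = v.toOrderHom 0) :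
    δ 0 ≫ myGlue m u v huv = v := by
  apply SimplexCategory.Hom.ext; apply OrderHom.ext; funext i; fin_cases i
  · exact huv
  · rfl

/-- The pushout square `[0] → [1] ⇒ [1] → [2]`, as a pullback cone in `Δᵒᵖ`. -/
def transCone : PullbackCone ((δ 0 : SimplexCategory.mk 0 ⟶ SimplexCategory.mk 1)).op
    ((δ 1 : SimplexCategory.mk 0 ⟶ SimplexCategory.mk 1)).op :=
  PullbackCone.mk ((δ 2 : SimplexCategory.mk 1 ⟶ SimplexCategory.mk 2)).op
    ((δ 0 : SimplexCategory.mk 1 ⟶ SimplexCategory.mk 2)).op (by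
      rw [← op_comp, ← op_comp]
      congr 1
      apply SimplexCategory.Hom.ext; apply OrderHom.ext; funext i; fin_cases i; rfl)

lemma transCond (s : PullbackCone ((δ 0 : SimplexCategory.mk 0 ⟶ SimplexCategory.mk 1)).op
    ((δ 1 : SimplexCategory.mk 0 ⟶ SimplexCategory.mk 1)).op) :
    s.fst.unop.toOrderHom 1 = s.snd.unop.toOrderHom 0 :=
  congrArg (fun φ => φ.unop.toOrderHom 0) s.condition

def transIsLimit : IsLimit transCone := by
  refine PullbackCone.IsLimit.mk _
    (fun s => (myGlue s.pt.unop s.fst.unop s.snd.unop (transCond s)).op) ?_ ?_ ?_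
  · intro s
    apply Quiver.Hom.unop_inj
    exact d2_glue _ _ _ (transCond s)
  · intro s
    apply Quiver.Hom.unop_inj
    exact d0_glue _ _ _ (transCond s)
  · intro s m h1 h2
    apply Quiver.Hom.unop_inj
    have h1' := congrArg Quiver.Hom.unop h1
    have h2' := congrArg Quiver.Hom.unop h2
    apply SimplexCategory.Hom.ext; apply OrderHom.ext; funext i; fin_cases i
    · exact congrArg (fun φ => φ.toOrderHom 0) h1'
    · exact congrArg (fun φ => φ.toOrderHom 1) h1'
    · exact congrArg (fun φ => φ.toOrderHom 1) h2'


/-- the constant map `[2] ⟶ [0]`. -/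
def myConst : SimplexCategory.mk 2 ⟶ SimplexCategory.mk 0 :=
  SimplexCategory.Hom.mk ⟨fun _ => 0, monotone_const⟩

/-- The coequalizer of the two outer vertices `[0] ⇉ [2]`, as a fork in `Δᵒᵖ`. -/
def asymFork : Fork ((δ 1 ≫ δ 1 : SimplexCategory.mk 0 ⟶ SimplexCategory.mk 2)).op
    ((δ 0 ≫ δ 0 : SimplexCategory.mk 0 ⟶ SimplexCategory.mk 2)).op :=
  Fork.ofι (P := op (SimplexCategory.mk 0)) myConst.op (by
    rw [← op_comp, ← op_comp]
    congr 1)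

lemma fork_vals (s : Fork ((δ 1 ≫ δ 1 : SimplexCategory.mk 0 ⟶ SimplexCategory.mk 2)).op
    ((δ 0 ≫ δ 0 : SimplexCategory.mk 0 ⟶ SimplexCategory.mk 2)).op) (i : Fin 3) :
    s.ι.unop.toOrderHom i = s.ι.unop.toOrderHom 0 := by
  have hc : s.ι.unop.toOrderHom 2 = s.ι.unop.toOrderHom 0 :=
    (congrArg (fun φ => φ.unop.toOrderHom 0) s.condition).symm
  have mono := s.ι.unop.toOrderHom.monotone
  have h01 : s.ι.unop.toOrderHom 0 ≤ s.ι.unop.toOrderHom i := mono (Fin.zero_le i)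
  have h12 : s.ι.unop.toOrderHom i ≤ s.ι.unop.toOrderHom 2 := mono (Fin.le_last i)
  exact le_antisymm (le_trans h12 (le_of_eq hc)) h01

def asymIsLimit : IsLimit asymFork := by
  refine Fork.IsLimit.mk _
    (fun s => Quiver.Hom.op (SimplexCategory.Hom.mk
      ⟨fun _ => s.ι.unop.toOrderHom 0, monotone_const⟩ :
        SimplexCategory.mk 0 ⟶ s.pt.unop)) ?_ ?_
  · intro s
    apply Quiver.Hom.unop_inj
    apply SimplexCategory.Hom.ext; apply OrderHom.ext; funext i
    exact (fork_vals s i).symm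
  · intro s m hm
    apply Quiver.Hom.unop_inj
    have hm' := congrArg Quiver.Hom.unop hm
    apply SimplexCategory.Hom.ext; apply OrderHom.ext; funext i; fin_cases i
    exact congrArg (fun φ => φ.toOrderHom 0) hm'

variable (X : SimplexCategoryᵒᵖ ⥤ Type)

def cospanCone (f g : X.obj (op (SimplexCategory.mk 1)))
    (hfg : X.map (δ 0).op f = X.map (δ 1).op g) :
    Cone (cospan ((δ 0 : SimplexCategory.mk 0 ⟶ SimplexCategory.mk 1)).op
      ((δ 1 : SimplexCategory.mk 0 ⟶ SimplexCategory.mk 1)).op ⋙ X) where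
  pt := PUnit
  π := { app := fun j => match j with
           | WalkingCospan.left => TypeCat.ofHom fun _ => f
           | WalkingCospan.right => TypeCat.ofHom fun _ => g
           | WalkingCospan.one => TypeCat.ofHom fun _ => X.map (δ 0).op f
         naturality := by
           rintro _ _ φ
           cases φ using WidePullbackShape.Hom.casesOn with
           | id => simp
           | term j => cases j <;> ext p <;> simp [hfg] }

lemma exists_filler (hX : IsContinuousSSet X) (f g : X.obj (op (SimplexCategory.mk 1)))
    (hfg : X.map (δ 0).op f = X.map (δ 1).op g) :
    ∃ h : X.obj (op (SimplexCategory.mk 2)),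
      X.map (δ 2).op h = f ∧ X.map (δ 0).op h = g := by
  obtain ⟨L⟩ := hX _ transCone ⟨transIsLimit⟩
  refine ⟨L.lift (cospanCone X f g hfg) PUnit.unit, ?_, ?_⟩
  · have := ConcreteCategory.congr_hom (L.fac (cospanCone X f g hfg) WalkingCospan.left) PUnit.unit
    exact this
  · have := ConcreteCategory.congr_hom (L.fac (cospanCone X f g hfg) WalkingCospan.right) PUnit.unit
    exact this

def forkCone (h : X.obj (op (SimplexCategory.mk 2)))
    (hh : X.map ((δ 1 ≫ δ 1 : SimplexCategory.mk 0 ⟶ SimplexCategory.mk 2)).op h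
        = X.map ((δ 0 ≫ δ 0 : SimplexCategory.mk 0 ⟶ SimplexCategory.mk 2)).op h) :
    Cone (parallelPair ((δ 1 ≫ δ 1 : SimplexCategory.mk 0 ⟶ SimplexCategory.mk 2)).op
      ((δ 0 ≫ δ 0 : SimplexCategory.mk 0 ⟶ SimplexCategory.mk 2)).op ⋙ X) where
  pt := PUnit
  π := { app := fun j => match j with
           | WalkingParallelPair.zero => TypeCat.ofHom fun _ => h
           | WalkingParallelPair.one => TypeCat.ofHom fun _ =>
               X.map ((δ 1 ≫ δ 1 : SimplexCategory.mk 0 ⟶ SimplexCategory.mk 2)).op h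
         naturality := by
           rintro _ _ φ
           cases φ using WalkingParallelPairHom.casesOn with
           | left => ext p; simp
           | right => ext p; simpa using hh
           | id => simp }

lemma exists_degenerate (hX : IsContinuousSSet X) (h : X.obj (op (SimplexCategory.mk 2)))
    (hh : X.map ((δ 1 ≫ δ 1 : SimplexCategory.mk 0 ⟶ SimplexCategory.mk 2)).op h
        = X.map ((δ 0 ≫ δ 0 : SimplexCategory.mk 0 ⟶ SimplexCategory.mk 2)).op h) :
    ∃ z : X.obj (op (SimplexCategory.mk 0)), X.map myConst.op z = h := by
  obtain ⟨L⟩ := hX _ asymFork ⟨asymIsLimit⟩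
  refine ⟨L.lift (forkCone X h hh) PUnit.unit, ?_⟩
  have := ConcreteCategory.congr_hom (L.fac (forkCone X h hh) WalkingParallelPair.zero) PUnit.unit
  exact this

lemma endo_mk0 (φ ψ : SimplexCategory.mk 0 ⟶ SimplexCategory.mk 0) : φ = ψ := by
  apply SimplexCategory.Hom.ext; apply OrderHom.ext; funext i
  apply Fin.ext
  have h1 := (φ.toOrderHom i).isLt
  have h2 := (ψ.toOrderHom i).isLt
  have h1' : ((φ.toOrderHom i : Fin _) : ℕ) < 1 := h1
  have h2' : ((ψ.toOrderHom i : Fin _) : ℕ) < 1 := h2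
  omega

lemma delta_BB : (δ 1 : SimplexCategory.mk 0 ⟶ SimplexCategory.mk 1) ≫ δ 1
    = (δ 1 : SimplexCategory.mk 0 ⟶ SimplexCategory.mk 1) ≫ δ 2 := by
  apply SimplexCategory.Hom.ext; apply OrderHom.ext; funext i; fin_cases i; rfl

lemma delta_CC : (δ 0 : SimplexCategory.mk 0 ⟶ SimplexCategory.mk 1) ≫ δ 1
    = (δ 0 : SimplexCategory.mk 0 ⟶ SimplexCategory.mk 1) ≫ δ 0 := by
  apply SimplexCategory.Hom.ext; apply OrderHom.ext; funext i; fin_cases i; rfl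

end SSetPO

open SSetPO SimplexCategory in
/-- Let `X : Δᵒᵖ → Set` be a continuous simplicial set. Then the
relation `≤_X` is a partial order on `X₀`: it is reflexive, transitive, and
antisymmetric. -/
theorem sSetLe_is_partial_order (X : SimplexCategoryᵒᵖ ⥤ Type) (hX : IsContinuousSSet X) :
    Reflexive (sSetLe X) ∧ Transitive (sSetLe X) ∧
      (∀ x y, sSetLe X x y → sSetLe X y x → x = y) := by
  refine ⟨?_, ?_, ?_⟩
  · intro x
    refine ⟨X.map (σ 0).op x, ?_, ?_⟩
    · rw [← FunctorToTypes.map_comp_apply, ← op_comp,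
        endo_mk0 (δ 1 ≫ σ 0) (𝟙 _), op_id, FunctorToTypes.map_id_apply]
    · rw [← FunctorToTypes.map_comp_apply, ← op_comp,
        endo_mk0 (δ 0 ≫ σ 0) (𝟙 _), op_id, FunctorToTypes.map_id_apply]
  · rintro x y z ⟨f, hf1, hf0⟩ ⟨g, hg1, hg0⟩
    obtain ⟨h, hd2, hd0⟩ := exists_filler X hX f g (by rw [hf0, hg1])
    refine ⟨X.map (δ 1).op h, ?_, ?_⟩
    · rw [← FunctorToTypes.map_comp_apply, ← op_comp, delta_BB, op_comp,
        FunctorToTypes.map_comp_apply, hd2, hf1]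
    · rw [← FunctorToTypes.map_comp_apply, ← op_comp, delta_CC, op_comp,
        FunctorToTypes.map_comp_apply, hd0, hg0]
  · rintro x y ⟨f, hf1, hf0⟩ ⟨g, hg1, hg0⟩
    obtain ⟨h, hd2, hd0⟩ := exists_filler X hX f g (by rw [hf0, hg1])
    have hv : X.map ((δ 1 ≫ δ 1 : SimplexCategory.mk 0 ⟶ SimplexCategory.mk 2)).op h
        = X.map ((δ 0 ≫ δ 0 : SimplexCategory.mk 0 ⟶ SimplexCategory.mk 2)).op h := by
      rw [delta_BB, op_comp, FunctorToTypes.map_comp_apply, hd2, hf1,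
        op_comp, FunctorToTypes.map_comp_apply, hd0, hg0]
    obtain ⟨w, hw⟩ := exists_degenerate X hX h hv
    have hf : f = X.map ((δ 2 ≫ myConst : SimplexCategory.mk 1 ⟶ SimplexCategory.mk 0)).op w := by
      rw [op_comp, FunctorToTypes.map_comp_apply, hw, hd2]
    have hx : x = w := by
      rw [← hf1, hf, ← FunctorToTypes.map_comp_apply, ← op_comp,
        endo_mk0 (δ 1 ≫ δ 2 ≫ myConst) (𝟙 _), op_id, FunctorToTypes.map_id_apply]
    have hy : y = w := by
      rw [← hf0, hf, ← FunctorToTypes.map_comp_apply, ← op_comp,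
        endo_mk0 (δ 0 ≫ δ 2 ≫ myConst) (𝟙 _), op_id, FunctorToTypes.map_id_apply]
    rw [hx, hy]
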